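/- In the setting of the finite-bank quotient transfer bound, for any a ∈ ℝ^{r₁} define f_a(x) = aᵀz₁(x) and the transferred probe f̃_{a,M}(x) = aᵀT_M z₂(x). Then for every γ > 0, the probability (under μ) that sign(f_a(x)) ≠ sign(f̃_{a,M}(x)) is at most P_μ[|f_a| ≤ γ] + ‖a‖² δ(M)² / (γ² σ_min⁺(W₁)²), where δ(M)² = E_μ‖U₁ᵀ(W₁h₁ − MW₂h₂)‖². -/

import Mathlib

open Matrix MeasureTheory

lemma sign_gap19 {γ u v : ℝ} (hγ : 0 < γ) (hu : γ < |u|)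
    (h : Real.sign u ≠ Real.sign v) : γ ≤ |u - v| := by
  rcases abs_cases u with ⟨he, hnn⟩ | ⟨he, hneg⟩
  · rw [he] at hu
    have hupos : 0 < u := hγ.trans hu
    have hv : v ≤ 0 := by
      by_contra hv
      push_neg at hv
      exact h (by rw [Real.sign_of_pos hupos, Real.sign_of_pos hv])
    have : γ ≤ u - v := by linarith
    exact this.trans (le_abs_self _)
  · rw [he] at hu
    have huneg : u < 0 := hneg
    have hv : 0 ≤ v := by
      by_contra hv
      push_neg at hv
      exact h (by rw [Real.sign_of_neg huneg, Real.sign_of_neg hv])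
    have : γ ≤ -(u - v) := by linarith
    exact this.trans (neg_le_abs _)

lemma meas_mulVec19 {X : Type*} [MeasurableSpace X] {m n : ℕ}
    (A : Matrix (Fin m) (Fin n) ℝ) {h : X → Fin n → ℝ} (hm : Measurable h) :
    Measurable fun x => A.mulVec (h x) := by
  apply measurable_pi_lambda
  intro i
  simp only [Matrix.mulVec, dotProduct]
  exact Finset.measurable_sum _ fun j _ => ((measurable_pi_apply j).comp hm).const_mul _

lemma meas_dot19 {X : Type*} [MeasurableSpace X] {n : ℕ}
    (a : Fin n → ℝ) {h : X → Fin n → ℝ} (hm : Measurable h) :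
    Measurable fun x => a ⬝ᵥ h x := by
  simp only [dotProduct]
  exact Finset.measurable_sum _ fun j _ => ((measurable_pi_apply j).comp hm).const_mul _

/-- Margin bound for classification transfer through the finite-bank quotient:
for `f_a(x) = aᵀ z₁(x)` and the transferred probe `f̃(x) = aᵀ T_M z₂(x)`, the
probability of a sign disagreement is at most the probability of a small margin
plus `‖a‖² δ(M)² / (γ² σ₀²)`, where `δ(M)²` is the expected bank-visible score
mismatch and `σ₀ > 0` lower-bounds the nonzero singular values of `W₁`. -/
theorem stmt19 {X : Type*} [MeasurableSpace X]
    {k₁ d₁ k₂ d₂ r₁ r₂ : ℕ}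
    (W₁ : Matrix (Fin k₁) (Fin d₁) ℝ) (W₂ : Matrix (Fin k₂) (Fin d₂) ℝ)
    (U₁ : Matrix (Fin k₁) (Fin r₁) ℝ) (R₁ : Matrix (Fin d₁) (Fin r₁) ℝ)
    (σ₁ : Fin r₁ → ℝ)
    (U₂ : Matrix (Fin k₂) (Fin r₂) ℝ) (R₂ : Matrix (Fin d₂) (Fin r₂) ℝ)
    (σ₂ : Fin r₂ → ℝ)
    (hU₁ : U₁ᵀ * U₁ = 1) (hR₁ : R₁ᵀ * R₁ = 1) (hσ₁ : ∀ i, 0 < σ₁ i)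
    (hU₂ : U₂ᵀ * U₂ = 1) (hR₂ : R₂ᵀ * R₂ = 1) (hσ₂ : ∀ i, 0 < σ₂ i)
    (hW₁ : W₁ = U₁ * Matrix.diagonal σ₁ * R₁ᵀ)
    (hW₂ : W₂ = U₂ * Matrix.diagonal σ₂ * R₂ᵀ)
    (h₁ : X → Fin d₁ → ℝ) (h₂ : X → Fin d₂ → ℝ)
    (hm₁ : Measurable h₁) (hm₂ : Measurable h₂)
    (M : Matrix (Fin k₁) (Fin k₂) ℝ)
    (μ : Measure X) [IsProbabilityMeasure μ]
    (σ₀ : ℝ) (hσ₀ : 0 < σ₀) (hσmin : ∀ i, σ₀ ≤ σ₁ i)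
    (a : Fin r₁ → ℝ) (γ : ℝ) (hγ : 0 < γ) :
    μ {x | Real.sign (a ⬝ᵥ R₁ᵀ.mulVec (h₁ x))
          ≠ Real.sign (a ⬝ᵥ (((Matrix.diagonal σ₁)⁻¹ * U₁ᵀ * M * U₂ *
              Matrix.diagonal σ₂).mulVec (R₂ᵀ.mulVec (h₂ x))))}
      ≤ μ {x | |a ⬝ᵥ R₁ᵀ.mulVec (h₁ x)| ≤ γ}
        + ENNReal.ofReal (∑ i, a i ^ 2)
          * (∫⁻ x, ENNReal.ofReal (∑ i,
              (U₁ᵀ.mulVec (W₁.mulVec (h₁ x)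
                - M.mulVec (W₂.mulVec (h₂ x))) i) ^ 2) ∂μ)
          / ENNReal.ofReal (γ ^ 2 * σ₀ ^ 2) := by
  set T : Matrix (Fin r₁) (Fin r₂) ℝ :=
    (Matrix.diagonal σ₁)⁻¹ * U₁ᵀ * M * U₂ * Matrix.diagonal σ₂ with hT
  set f : X → ℝ := fun x => a ⬝ᵥ R₁ᵀ.mulVec (h₁ x) with hf
  set g : X → ℝ := fun x => a ⬝ᵥ T.mulVec (R₂ᵀ.mulVec (h₂ x)) with hg
  set w : X → Fin r₁ → ℝ :=
    fun x => R₁ᵀ.mulVec (h₁ x) - T.mulVec (R₂ᵀ.mulVec (h₂ x)) with hw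
  set e : X → Fin r₁ → ℝ :=
    fun x => U₁ᵀ.mulVec (W₁.mulVec (h₁ x) - M.mulVec (W₂.mulVec (h₂ x))) with he
  -- diagonal σ₁ is invertible
  have hdet : IsUnit (Matrix.diagonal σ₁).det := by
    rw [Matrix.det_diagonal]
    exact isUnit_iff_ne_zero.mpr (Finset.prod_pos (fun i _ => hσ₁ i)).ne'
  have hDD : Matrix.diagonal σ₁ * (Matrix.diagonal σ₁)⁻¹ = 1 :=
    Matrix.mul_nonsing_inv _ hdet
  have hDT : Matrix.diagonal σ₁ * T = U₁ᵀ * M * U₂ * Matrix.diagonal σ₂ := by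
    rw [hT]
    simp only [← Matrix.mul_assoc]
    rw [hDD, Matrix.one_mul]
  have hA : U₁ᵀ * W₁ = Matrix.diagonal σ₁ * R₁ᵀ := by
    rw [hW₁, ← Matrix.mul_assoc, ← Matrix.mul_assoc, hU₁, Matrix.one_mul]
  have hB : U₁ᵀ * (M * W₂) = Matrix.diagonal σ₁ * (T * R₂ᵀ) := by
    rw [hW₂]
    conv_rhs => rw [← Matrix.mul_assoc, hDT]
    simp only [Matrix.mul_assoc]
  -- key: e x = diagonal σ₁ * w x
  have hew : ∀ x, e x = (Matrix.diagonal σ₁).mulVec (w x) := by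
    intro x
    rw [he, hw]
    simp only [Matrix.mulVec_sub, Matrix.mulVec_mulVec, hA, hB]
  -- pointwise bound
  have hpt : ∀ x, σ₀ ^ 2 * (f x - g x) ^ 2 ≤ (∑ i, a i ^ 2) * ∑ i, e x i ^ 2 := by
    intro x
    have hfg : f x - g x = ∑ i, a i * w x i := by
      rw [hf, hg, hw]
      simp [dotProduct, Pi.sub_apply, mul_sub, Finset.sum_sub_distrib]
    have hcs : (f x - g x) ^ 2 ≤ (∑ i, a i ^ 2) * ∑ i, w x i ^ 2 := by
      rw [hfg]; exact Finset.sum_mul_sq_le_sq_mul_sq _ _ _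
    have hws : σ₀ ^ 2 * ∑ i, w x i ^ 2 ≤ ∑ i, e x i ^ 2 := by
      rw [Finset.mul_sum]
      apply Finset.sum_le_sum
      intro i _
      rw [hew x]
      have hdi : (Matrix.diagonal σ₁).mulVec (w x) i = σ₁ i * w x i := by
        simp [Matrix.mulVec_diagonal]
      rw [hdi, mul_pow]
      have h1 : σ₀ ^ 2 ≤ σ₁ i ^ 2 := by
        have := hσmin i
        nlinarith [hσ₀]
      exact mul_le_mul_of_nonneg_right h1 (sq_nonneg _)
    have hsa : 0 ≤ ∑ i, a i ^ 2 := Finset.sum_nonneg fun i _ => sq_nonneg _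
    calc σ₀ ^ 2 * (f x - g x) ^ 2
        ≤ σ₀ ^ 2 * ((∑ i, a i ^ 2) * ∑ i, w x i ^ 2) :=
          mul_le_mul_of_nonneg_left hcs (sq_nonneg _)
      _ = (∑ i, a i ^ 2) * (σ₀ ^ 2 * ∑ i, w x i ^ 2) := by ring
      _ ≤ (∑ i, a i ^ 2) * ∑ i, e x i ^ 2 :=
          mul_le_mul_of_nonneg_left hws hsa
  -- measurability
  have hmd : Measurable fun x => f x - g x :=
    (meas_dot19 a (meas_mulVec19 R₁ᵀ hm₁)).sub
      (meas_dot19 a (meas_mulVec19 T (meas_mulVec19 R₂ᵀ hm₂)))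
  have hme : Measurable e :=
    meas_mulVec19 U₁ᵀ ((meas_mulVec19 W₁ hm₁).sub
      (meas_mulVec19 M (meas_mulVec19 W₂ hm₂)))
  have hmL : Measurable fun x => ENNReal.ofReal (∑ i, e x i ^ 2) :=
    ENNReal.measurable_ofReal.comp
      (Finset.measurable_sum _ fun i _ =>
        ((measurable_pi_apply i).comp hme).pow_const 2)
  -- event inclusion
  have hincl : {x | Real.sign (f x) ≠ Real.sign (g x)}
      ⊆ {x | |f x| ≤ γ} ∪ {x | γ ≤ |f x - g x|} := by
    intro x hx
    by_cases hm : |f x| ≤ γ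
    · exact Or.inl hm
    · exact Or.inr (sign_gap19 hγ (lt_of_not_ge hm) hx)
  -- Markov bound on the second event
  have hmk : μ {x | γ ≤ |f x - g x|}
      ≤ ENNReal.ofReal (∑ i, a i ^ 2)
          * (∫⁻ x, ENNReal.ofReal (∑ i, e x i ^ 2) ∂μ)
          / ENNReal.ofReal (γ ^ 2 * σ₀ ^ 2) := by
    have hset : {x | γ ≤ |f x - g x|}
        = {x | ENNReal.ofReal (γ ^ 2) ≤ ENNReal.ofReal ((f x - g x) ^ 2)} := by
      ext x
      simp only [Set.mem_setOf_eq]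
      rw [ENNReal.ofReal_le_ofReal_iff (sq_nonneg _), ← sq_abs (f x - g x)]
      constructor
      · intro h; exact pow_le_pow_left₀ hγ.le h 2
      · intro h
        by_contra hc
        push_neg at hc
        exact absurd h (not_le.mpr (pow_lt_pow_left₀ hc (abs_nonneg _) two_ne_zero))
    have ham : AEMeasurable (fun x => ENNReal.ofReal ((f x - g x) ^ 2)) μ :=
      (ENNReal.measurable_ofReal.comp (hmd.pow_const 2)).aemeasurable
    have h1 : μ {x | γ ≤ |f x - g x|}
        ≤ (∫⁻ x, ENNReal.ofReal ((f x - g x) ^ 2) ∂μ) / ENNReal.ofReal (γ ^ 2) := by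
      rw [hset]
      exact meas_ge_le_lintegral_div ham
        (ENNReal.ofReal_pos.mpr (by positivity)).ne' ENNReal.ofReal_ne_top
    have h2 : (∫⁻ x, ENNReal.ofReal ((f x - g x) ^ 2) ∂μ)
        ≤ ENNReal.ofReal ((∑ i, a i ^ 2) / σ₀ ^ 2)
          * ∫⁻ x, ENNReal.ofReal (∑ i, e x i ^ 2) ∂μ := by
      rw [← lintegral_const_mul _ hmL]
      apply lintegral_mono
      intro x
      dsimp only
      rw [← ENNReal.ofReal_mul (by positivity)]
      apply ENNReal.ofReal_le_ofReal
      rw [div_mul_eq_mul_div, le_div_iff₀ (by positivity)]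
      nlinarith [hpt x]
    have key : ENNReal.ofReal ((∑ i, a i ^ 2) / σ₀ ^ 2)
          * (∫⁻ x, ENNReal.ofReal (∑ i, e x i ^ 2) ∂μ) / ENNReal.ofReal (γ ^ 2)
        = ENNReal.ofReal (∑ i, a i ^ 2)
          * (∫⁻ x, ENNReal.ofReal (∑ i, e x i ^ 2) ∂μ)
          / ENNReal.ofReal (γ ^ 2 * σ₀ ^ 2) := by
      rw [ENNReal.ofReal_div_of_pos (by positivity),
        ENNReal.ofReal_mul (by positivity : (0:ℝ) ≤ γ ^ 2)]
      rw [div_eq_mul_inv, div_eq_mul_inv, div_eq_mul_inv,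
        ENNReal.mul_inv (Or.inl (ENNReal.ofReal_pos.mpr (by positivity)).ne')
          (Or.inl ENNReal.ofReal_ne_top)]
      ring
    calc μ {x | γ ≤ |f x - g x|}
        ≤ (∫⁻ x, ENNReal.ofReal ((f x - g x) ^ 2) ∂μ) / ENNReal.ofReal (γ ^ 2) := h1
      _ ≤ ENNReal.ofReal ((∑ i, a i ^ 2) / σ₀ ^ 2)
          * (∫⁻ x, ENNReal.ofReal (∑ i, e x i ^ 2) ∂μ) / ENNReal.ofReal (γ ^ 2) :=
          ENNReal.div_le_div_right h2 _
      _ = _ := key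
  calc μ {x | Real.sign (f x) ≠ Real.sign (g x)}
      ≤ μ ({x | |f x| ≤ γ} ∪ {x | γ ≤ |f x - g x|}) := measure_mono hincl
    _ ≤ μ {x | |f x| ≤ γ} + μ {x | γ ≤ |f x - g x|} := measure_union_le _ _
    _ ≤ _ := add_le_add_right hmk _
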